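/- Define M = P^H (H − λᵢ S) P where P = U_{i−1}^c (U_{i−1}^c)^H S. Then M is Hermitian positive semidefinite and M = G G^H, where G = S U_i^c (Λ_i^c − λᵢ I)^{1/2}, U_i^c = [u_{i+1} ... uₙ], Λ_i^c = diag(λ_{i+1},...,λₙ); moreover G has full column rank. -/

import Mathlib

open Matrix
open scoped ComplexOrder

private lemma aux_mul_sub {l m p q : Type*} [Fintype m] (A : Matrix l m ℂ) (B : Matrix m q ℂ)
    (g : p → q) : A * B.submatrix id g = (A * B).submatrix id g := by
  ext i k; simp [Matrix.mul_apply]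

private lemma aux_sub_mul {l m p q : Type*} [Fintype l] (A : Matrix m l ℂ) (B : Matrix l q ℂ)
    (g : p → m) : A.submatrix g id * B = (A * B).submatrix g id := by
  ext i k; simp [Matrix.mul_apply]

private lemma aux_key {n : ℕ} (S U : Matrix (Fin n) (Fin n) ℂ) (hortho : Uᴴ * S * U = 1)
    {p : ℕ} (g : Fin p → Fin n) (hg : Function.Injective g) :
    (U.submatrix id g)ᴴ * (S * U.submatrix id g) = 1 := by
  rw [conjTranspose_submatrix, aux_sub_mul]
  rw [aux_mul_sub, aux_mul_sub, Matrix.submatrix_submatrix, ← Matrix.mul_assoc, hortho]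
  ext a b
  simp [Matrix.one_apply, hg.eq_iff]

private lemma aux_sum {s t : ℕ} (hst : s + 1 = t) (g : Fin t → ℂ)
    (h0 : g ⟨0, by omega⟩ = 0) :
    ∑ k, g k = ∑ k : Fin s, g ⟨k.1 + 1, by omega⟩ := by
  subst hst
  rw [Fin.sum_univ_succ]
  have h0' : g 0 = 0 := by
    have : (0 : Fin (s+1)) = ⟨0, by omega⟩ := Fin.ext (by simp)
    rw [this, h0]
  rw [h0', zero_add]
  exact Finset.sum_congr rfl fun k _ => congrArg g (Fin.ext (by simp))

/-- `M = Pᴴ(H − λᵢS)P` with `P = U_{i−1}ᶜ (U_{i−1}ᶜ)ᴴ S` is Hermitian positive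
semidefinite, `M = G Gᴴ` with `G = S Uᵢᶜ (Λᵢᶜ − λᵢI)^{1/2}`, and `G` has full column
rank. (0-based: the target eigenvalue has index `m`.) -/
theorem stmt13 {n m : ℕ} (hm1 : m + 1 < n)
    (H S U Λ : Matrix (Fin n) (Fin n) ℂ) (lam : Fin n → ℝ)
    (hH : H.IsHermitian) (hS : S.PosDef)
    (hΛ : Λ = Matrix.diagonal fun k => (lam k : ℂ))
    (hmono : Monotone lam)
    (hgap : lam ⟨m, by omega⟩ < lam ⟨m + 1, hm1⟩)
    (hortho : Uᴴ * S * U = 1)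
    (heig : H * U = S * U * Λ)
    (Uc : Matrix (Fin n) (Fin (n - m)) ℂ)
    (hUc : Uc = U.submatrix id fun k => (⟨m + k.1, by have := k.2; omega⟩ : Fin n))
    (P : Matrix (Fin n) (Fin n) ℂ) (hP : P = Uc * Ucᴴ * S)
    (M : Matrix (Fin n) (Fin n) ℂ)
    (hM : M = Pᴴ * (H - ((lam ⟨m, by omega⟩ : ℝ) : ℂ) • S) * P)
    (Uc2 : Matrix (Fin n) (Fin (n - (m + 1))) ℂ)
    (hUc2 : Uc2 = U.submatrix id fun k => (⟨m + 1 + k.1, by have := k.2; omega⟩ : Fin n))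
    (G : Matrix (Fin n) (Fin (n - (m + 1))) ℂ)
    (hG : G = S * Uc2 * Matrix.diagonal fun k =>
      ((Real.sqrt (lam ⟨m + 1 + k.1, by have := k.2; omega⟩ - lam ⟨m, by omega⟩) : ℝ) : ℂ)) :
    M.PosSemidef ∧ M = G * Gᴴ ∧ LinearIndependent ℂ (fun j => Gᵀ j) := by
  have hmn : m < n := by omega
  set f : Fin (n - m) → Fin n := fun k => ⟨m + k.1, by have := k.2; omega⟩ with hf
  set f2 : Fin (n - (m + 1)) → Fin n := fun k => ⟨m + 1 + k.1, by have := k.2; omega⟩ with hf2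
  have hfinj : Function.Injective f := by
    intro a b hab; have := congrArg Fin.val hab; simp [hf] at this; exact Fin.ext this
  have hf2inj : Function.Injective f2 := by
    intro a b hab; exact Fin.ext (by have := congrArg Fin.val hab; simp [hf2] at this; omega)
  set lm : ℝ := lam ⟨m, hmn⟩ with hlm
  set c : ℂ := (lm : ℂ) with hc
  set D : Matrix (Fin (n - m)) (Fin (n - m)) ℂ := Matrix.diagonal (fun k => ((lam (f k) : ℂ) - c)) with hD
  set D2 : Matrix (Fin (n - (m + 1))) (Fin (n - (m + 1))) ℂ :=
    Matrix.diagonal (fun k => ((lam (f2 k) : ℂ) - c)) with hD2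
  set d2s : Matrix (Fin (n - (m + 1))) (Fin (n - (m + 1))) ℂ :=
    Matrix.diagonal (fun k => ((Real.sqrt (lam (f2 k) - lm) : ℝ) : ℂ)) with hd2s
  have hpos : ∀ k : Fin (n - (m + 1)), 0 < lam (f2 k) - lm := by
    intro k
    have h1 : lam ⟨m + 1, hm1⟩ ≤ lam (f2 k) := hmono (by simp [hf2, Fin.le_def])
    linarith
  -- entrywise eigen relation
  have heig' : ∀ i j, (H * U) i j = (S * U) i j * (lam j : ℂ) := by
    intro i j
    have h := congrFun (congrFun heig i) j
    rwa [hΛ, Matrix.mul_diagonal] at h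
  -- (H - c•S) * Uc = S * Uc * D
  have hHUc : (H - c • S) * Uc = S * Uc * D := by
    rw [hUc, hD, aux_mul_sub]
    ext i k
    rw [Matrix.mul_diagonal]
    simp only [Matrix.sub_mul, Matrix.sub_apply, Matrix.smul_mul, Matrix.smul_apply,
      Matrix.submatrix_apply, smul_eq_mul, id_eq]
    have hsu : (S * U.submatrix id f) i k = (S * U) i (f k) := by
      simp [Matrix.mul_apply]
    rw [heig' i (f k), hsu]
    ring
  -- orthonormality of submatrices
  have hUcS : Ucᴴ * (S * Uc) = 1 := by rw [hUc]; exact aux_key S U hortho f hfinj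
  have hUc2S : Uc2ᴴ * (S * Uc2) = 1 := by rw [hUc2]; exact aux_key S U hortho f2 hf2inj
  -- M = S * (Uc * D * Ucᴴ) * S
  have hPH : Pᴴ = S * Uc * Ucᴴ := by
    rw [hP]
    simp [Matrix.conjTranspose_mul, hS.1.eq, Matrix.mul_assoc]
  have hM2 : M = S * (Uc * (D * (Ucᴴ * S))) := by
    rw [hM, hPH, hP]
    have e1 : (H - c • S) * (Uc * Ucᴴ * S) = S * Uc * D * (Ucᴴ * S) := by
      rw [Matrix.mul_assoc Uc, ← Matrix.mul_assoc (H - c • S), hHUc]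
    calc S * Uc * Ucᴴ * (H - c • S) * (Uc * Ucᴴ * S)
        = S * Uc * Ucᴴ * ((H - c • S) * (Uc * Ucᴴ * S)) := by
          rw [Matrix.mul_assoc (S * Uc * Ucᴴ)]
      _ = S * Uc * Ucᴴ * (S * Uc * D * (Ucᴴ * S)) := by rw [e1]
      _ = S * (Uc * ((Ucᴴ * (S * Uc)) * (D * (Ucᴴ * S)))) := by
          simp only [Matrix.mul_assoc]
      _ = S * (Uc * (D * (Ucᴴ * S))) := by rw [hUcS, Matrix.one_mul]
  -- drop the zero eigendirection
  have hcast : (n - (m + 1)) + 1 = n - m := by omega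
  have hmid : Uc * D * Ucᴴ = Uc2 * D2 * Uc2ᴴ := by
    ext i j
    rw [Matrix.mul_apply, Matrix.mul_apply]
    have hL : ∀ k, (Uc * D) i k * Ucᴴ k j
        = U i (f k) * ((lam (f k) : ℂ) - c) * (starRingEnd ℂ) (U j (f k)) := by
      intro k
      rw [hD, Matrix.mul_diagonal, hUc, Matrix.conjTranspose_apply, Matrix.submatrix_apply]
      rfl
    have hR : ∀ k, (Uc2 * D2) i k * Uc2ᴴ k j
        = U i (f2 k) * ((lam (f2 k) : ℂ) - c) * (starRingEnd ℂ) (U j (f2 k)) := by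
      intro k
      rw [hD2, Matrix.mul_diagonal, hUc2, Matrix.conjTranspose_apply, Matrix.submatrix_apply]
      rfl
    calc ∑ k, (Uc * D) i k * Ucᴴ k j
        = ∑ k : Fin (n - m),
            U i (f k) * ((lam (f k) : ℂ) - c) * (starRingEnd ℂ) (U j (f k)) :=
          Finset.sum_congr rfl fun k _ => hL k
      _ = ∑ k : Fin (n - (m + 1)),
            (fun k : Fin (n - m) =>
              U i (f k) * ((lam (f k) : ℂ) - c) * (starRingEnd ℂ) (U j (f k)))
              ⟨k.1 + 1, by omega⟩ := by
          refine aux_sum hcast _ ?_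
          have hf0 : f ⟨0, by omega⟩ = ⟨m, hmn⟩ := Fin.ext (by simp [hf])
          simp only [hf0, hc, hlm, sub_self, mul_zero, zero_mul]
      _ = ∑ k, (Uc2 * D2) i k * Uc2ᴴ k j := by
          refine Finset.sum_congr rfl fun k _ => ?_
          have hfk : f ⟨k.1 + 1, by omega⟩ = f2 k := Fin.ext (by simp [hf, hf2]; omega)
          rw [hR k]
          simp only [hfk]
  have hM3 : M = S * Uc2 * D2 * (Uc2ᴴ * S) := by
    rw [hM2, show Uc * (D * (Ucᴴ * S)) = Uc * D * Ucᴴ * S by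
      simp only [Matrix.mul_assoc], hmid]
    simp only [Matrix.mul_assoc]
  -- conjTranspose of G
  have hd2sH : d2sᴴ = d2s := by
    rw [hd2s, Matrix.diagonal_conjTranspose]
    have he : (star fun k => ((Real.sqrt (lam (f2 k) - lm) : ℝ) : ℂ))
        = fun k => ((Real.sqrt (lam (f2 k) - lm) : ℝ) : ℂ) :=
      funext fun k => Complex.conj_ofReal _
    rw [he]
  have hG' : G = @HMul.hMul _ _ _ Matrix.instHMulOfFintypeOfMulOfAddCommMonoid (S * Uc2) d2s := hG
  have hGH : Gᴴ = d2s * (Uc2ᴴ * S) := by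
    rw [hG']
    rw [Matrix.conjTranspose_mul, Matrix.conjTranspose_mul, hd2sH, hS.1.eq]
  have hd2sq : d2s * d2s = D2 := by
    rw [hd2s, hD2, Matrix.diagonal_mul_diagonal]
    have he : (fun k => ((Real.sqrt (lam (f2 k) - lm) : ℝ) : ℂ)
          * ((Real.sqrt (lam (f2 k) - lm) : ℝ) : ℂ))
        = fun k => ((lam (f2 k) : ℂ) - c) := by
      funext k
      rw [← Complex.ofReal_mul, Real.mul_self_sqrt (le_of_lt (hpos k)), hc, Complex.ofReal_sub]
    rw [he]
  have hGG : M = G * Gᴴ := by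
    rw [hGH, hG, hM3]
    calc S * Uc2 * D2 * (Uc2ᴴ * S)
        = S * Uc2 * (d2s * d2s) * (Uc2ᴴ * S) := by rw [hd2sq]
      _ = S * Uc2 * d2s * (d2s * (Uc2ᴴ * S)) := by simp only [Matrix.mul_assoc]
  refine ⟨?_, hGG, ?_⟩
  · rw [hGG]; exact Matrix.posSemidef_self_mul_conjTranspose G
  · -- linear independence of columns of G
    have hUc2G : Uc2ᴴ * G = d2s := by
      rw [hG', show S * Uc2 * d2s = S * Uc2 * d2s from rfl]
      rw [show Uc2ᴴ * (S * Uc2 * d2s) = Uc2ᴴ * (S * Uc2) * d2s by simp only [Matrix.mul_assoc]]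
      rw [hUc2S, Matrix.one_mul]
    refine Fintype.linearIndependent_iff.mpr fun g hgsum j => ?_
    have hmv : G *ᵥ g = 0 := by
      funext i
      have h := congrFun hgsum i
      simpa [Matrix.mulVec, dotProduct, Matrix.transpose_apply, mul_comm] using h
    have h2 : d2s *ᵥ g = 0 := by
      rw [← hUc2G, ← Matrix.mulVec_mulVec, hmv, Matrix.mulVec_zero]
    have h3 := congrFun h2 j
    rw [hd2s, Matrix.mulVec_diagonal] at h3
    have hne : ((Real.sqrt (lam (f2 j) - lm) : ℝ) : ℂ) ≠ 0 := by
      simp only [ne_eq, Complex.ofReal_eq_zero]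
      exact ne_of_gt (Real.sqrt_pos.mpr (hpos j))
    exact (mul_eq_zero.mp h3).resolve_left hne
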